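/- In the exterior algebra over Q generated by elements r*_{ij} (1 ≤ i ≠ j ≤ n) subject to the relations r*_{ij}∧r*_{ik} = r*_{ij}∧r*_{jk} − r*_{ik}∧r*_{kj}, r*_{ik}∧r*_{jk} = r*_{ij}∧r*_{jk} − r*_{ji}∧r*_{ik}, and r*_{ij}∧r*_{ji} = 0 (i,j,k distinct), any monomial whose associated directed graph (edge (i,j) for each factor r*_{ij}) contains a loop (directed or undirected cycle) is zero. -/

import Mathlib

/-- Generator indices `(i,j)` with `1 ≤ i ≠ j ≤ n`. -/
def PvGen (n : ℕ) := {p : Fin n × Fin n // p.1 ≠ p.2}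

/-- The `ℚ`-vector space spanned by the symbols `r*_{ij}`. -/
abbrev PvV (n : ℕ) := PvGen n →₀ ℚ

/-- The generator `r*_{ij}` of the exterior algebra. -/
noncomputable def rd {n : ℕ} (i j : Fin n) (h : i ≠ j) :
    ExteriorAlgebra ℚ (PvV n) :=
  ExteriorAlgebra.ι ℚ (Finsupp.single ⟨(i, j), h⟩ (1 : ℚ))

/-- The defining relations of `pvb_n^!` inside the exterior algebra:
`r*_{ij}∧r*_{ik} = r*_{ij}∧r*_{jk} − r*_{ik}∧r*_{kj}`,
`r*_{ik}∧r*_{jk} = r*_{ij}∧r*_{jk} − r*_{ji}∧r*_{ik}`, and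
`r*_{ij}∧r*_{ji} = 0`, for `i,j,k` distinct. -/
def pvbDualRel (n : ℕ) : ExteriorAlgebra ℚ (PvV n) → ExteriorAlgebra ℚ (PvV n) → Prop :=
  fun x y => y = 0 ∧
    ((∃ (i j k : Fin n) (hij : i ≠ j) (hik : i ≠ k) (hjk : j ≠ k),
        x = rd i j hij * rd i k hik -
          (rd i j hij * rd j k hjk - rd i k hik * rd k j hjk.symm)) ∨
     (∃ (i j k : Fin n) (hij : i ≠ j) (hik : i ≠ k) (hjk : j ≠ k),
        x = rd i k hik * rd j k hjk -
          (rd i j hij * rd j k hjk - rd j i hij.symm * rd i k hik)) ∨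
     (∃ (i j : Fin n) (hij : i ≠ j), x = rd i j hij * rd j i hij.symm))

/-- The quadratic dual algebra `pvb_n^!`. -/
abbrev PvbDual (n : ℕ) := RingQuot (pvbDualRel n)

/-- The image in `pvb_n^!` of the monomial `r*_{i₁j₁}∧⋯∧r*_{iₘjₘ}` indexed by a
list of edges. -/
noncomputable def pvbMonomial {n : ℕ} (L : List (PvGen n)) : PvbDual n :=
  (L.map fun e =>
    RingQuot.mkAlgHom ℚ (pvbDualRel n)
      (ExteriorAlgebra.ι ℚ (Finsupp.single e (1 : ℚ)))).prod

namespace Pvb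
variable {n : ℕ}

noncomputable def R (e : PvGen n) : PvbDual n :=
  RingQuot.mkAlgHom ℚ (pvbDualRel n) (ExteriorAlgebra.ι ℚ (Finsupp.single e (1 : ℚ)))

lemma R_eq (i j : Fin n) (h : i ≠ j) :
    R ⟨(i,j),h⟩ = RingQuot.mkAlgHom ℚ (pvbDualRel n) (rd i j h) := rfl

lemma R_sq (e : PvGen n) : R e * R e = 0 := by
  rw [R, ← map_mul, ExteriorAlgebra.ι_sq_zero, map_zero]

lemma R_anticomm (e f : PvGen n) : R e * R f = -(R f * R e) := by
  have h : R e * R f + R f * R e = 0 := by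
    rw [R, R, ← map_mul (RingQuot.mkAlgHom ℚ (pvbDualRel n)),
      ← map_mul (RingQuot.mkAlgHom ℚ (pvbDualRel n)),
      ← map_add (RingQuot.mkAlgHom ℚ (pvbDualRel n)),
      ExteriorAlgebra.ι_add_mul_swap, map_zero]
  linear_combination (norm := abel) h

lemma relC (i j : Fin n) (h : i ≠ j) : R ⟨(i,j),h⟩ * R ⟨(j,i),h.symm⟩ = 0 := by
  have := RingQuot.mkAlgHom_rel ℚ
    (show pvbDualRel n (rd i j h * rd j i h.symm) 0 from
      ⟨rfl, Or.inr (Or.inr ⟨i, j, h, rfl⟩)⟩)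
  simpa [R_eq, map_mul, map_zero] using this

lemma relA (i j k : Fin n) (hij : i ≠ j) (hik : i ≠ k) (hjk : j ≠ k) :
    R ⟨(i,j),hij⟩ * R ⟨(i,k),hik⟩ =
      R ⟨(i,j),hij⟩ * R ⟨(j,k),hjk⟩ - R ⟨(i,k),hik⟩ * R ⟨(k,j),hjk.symm⟩ := by
  have := RingQuot.mkAlgHom_rel ℚ
    (show pvbDualRel n (rd i j hij * rd i k hik -
        (rd i j hij * rd j k hjk - rd i k hik * rd k j hjk.symm)) 0 from
      ⟨rfl, Or.inl ⟨i, j, k, hij, hik, hjk, rfl⟩⟩)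
  simp only [map_sub, map_mul, map_zero, sub_eq_zero] at this
  simpa [R_eq] using this

lemma relB (i j k : Fin n) (hij : i ≠ j) (hik : i ≠ k) (hjk : j ≠ k) :
    R ⟨(i,k),hik⟩ * R ⟨(j,k),hjk⟩ =
      R ⟨(i,j),hij⟩ * R ⟨(j,k),hjk⟩ - R ⟨(j,i),hij.symm⟩ * R ⟨(i,k),hik⟩ := by
  have := RingQuot.mkAlgHom_rel ℚ
    (show pvbDualRel n (rd i k hik * rd j k hjk -
        (rd i j hij * rd j k hjk - rd j i hij.symm * rd i k hik)) 0 from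
      ⟨rfl, Or.inr (Or.inl ⟨i, j, k, hij, hik, hjk, rfl⟩)⟩)
  simp only [map_sub, map_mul, map_zero, sub_eq_zero] at this
  simpa [R_eq] using this



/-- Span of elements of the form `x * R h` where `h` is a generator on the pair `{u,w}`. -/
noncomputable def T (u w : Fin n) : Submodule ℚ (PvbDual n) :=
  Submodule.span ℚ
    {z | ∃ (x : PvbDual n) (h : PvGen n), (h.1 = (u,w) ∨ h.1 = (w,u)) ∧ z = x * R h}

lemma mem_T {u w : Fin n} (x : PvbDual n) (h : PvGen n)
    (hh : h.1 = (u,w) ∨ h.1 = (w,u)) : x * R h ∈ T u w :=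
  Submodule.subset_span ⟨x, h, hh, rfl⟩

lemma mul_mem_T {u w : Fin n} (a : PvbDual n) {z : PvbDual n} (hz : z ∈ T u w) :
    a * z ∈ T u w := by
  have hle : T u w ≤ Submodule.comap (LinearMap.mulLeft ℚ a) (T u w) := by
    rw [T, Submodule.span_le]
    rintro _ ⟨x, h, hh, rfl⟩
    exact Submodule.subset_span ⟨a * x, h, hh, (mul_assoc _ _ _).symm⟩
  exact hle hz

lemma rewrite_mem {u v w : Fin n} (huv : u ≠ v) (huw : u ≠ w) (hvw : v ≠ w)
    (g1 g2 : PvGen n) (h1 : g1.1 = (u,v) ∨ g1.1 = (v,u))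
    (h2 : g2.1 = (v,w) ∨ g2.1 = (w,v)) :
    R g1 * R g2 ∈ T u w := by
  rcases h1 with h1 | h1
  · have hg1 : g1 = ⟨(u,v), huv⟩ := Subtype.ext h1
    subst hg1
    rcases h2 with h2 | h2
    · have hg2 : g2 = ⟨(v,w), hvw⟩ := Subtype.ext h2
      subst hg2
      have e1 := relA u v w huv huw hvw
      have key : R ⟨(u,v),huv⟩ * R ⟨(v,w),hvw⟩ =
          R ⟨(u,v),huv⟩ * R ⟨(u,w),huw⟩ + R ⟨(u,w),huw⟩ * R ⟨(w,v),hvw.symm⟩ := by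
        linear_combination (norm := abel) -e1
      rw [key]
      refine Submodule.add_mem _ (mem_T _ _ (Or.inl rfl)) ?_
      erw [R_anticomm]
      exact Submodule.neg_mem _ (mem_T _ _ (Or.inl rfl))
    · have hg2 : g2 = ⟨(w,v), hvw.symm⟩ := Subtype.ext h2
      subst hg2
      have e1 := relB u w v huw huv hvw.symm
      rw [e1]
      refine Submodule.sub_mem _ ?_ ?_
      · erw [R_anticomm]; exact Submodule.neg_mem _ (mem_T _ _ (Or.inl rfl))
      · erw [R_anticomm]; exact Submodule.neg_mem _ (mem_T _ _ (Or.inr rfl))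
  · have hg1 : g1 = ⟨(v,u), huv.symm⟩ := Subtype.ext h1
    subst hg1
    rcases h2 with h2 | h2
    · have hg2 : g2 = ⟨(v,w), hvw⟩ := Subtype.ext h2
      subst hg2
      have e1 := relA v u w huv.symm hvw huw
      rw [e1]
      exact Submodule.sub_mem _ (mem_T _ _ (Or.inl rfl)) (mem_T _ _ (Or.inr rfl))
    · have hg2 : g2 = ⟨(w,v), hvw.symm⟩ := Subtype.ext h2
      subst hg2
      have e1 := relA w v u hvw.symm huw.symm huv.symm
      -- e1 : R (w,v) * R (w,u) = R (w,v) * R (v,u) - R (w,u) * R (u,v)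
      have key : R ⟨(v,u),huv.symm⟩ * R ⟨(w,v),hvw.symm⟩ =
          -(R ⟨(w,v),hvw.symm⟩ * R ⟨(w,u),huw.symm⟩) - R ⟨(w,u),huw.symm⟩ * R ⟨(u,v),huv⟩ := by
        erw [R_anticomm]
        linear_combination (norm := abel) e1
      rw [key]
      refine Submodule.sub_mem _ (Submodule.neg_mem _ (mem_T _ _ (Or.inr rfl))) ?_
      erw [R_anticomm]
      exact Submodule.neg_mem _ (mem_T _ _ (Or.inr rfl))

lemma T_mul_gen {u v w : Fin n} (huv : u ≠ v) (huw : u ≠ w) (hvw : v ≠ w)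
    {z : PvbDual n} (hz : z ∈ T u v) (g2 : PvGen n)
    (h2 : g2.1 = (v,w) ∨ g2.1 = (w,v)) : z * R g2 ∈ T u w := by
  have hle : T u v ≤ Submodule.comap (LinearMap.mulRight ℚ (R g2)) (T u w) := by
    rw [T, Submodule.span_le]
    rintro _ ⟨x, h, hh, rfl⟩
    simp only [SetLike.mem_coe, Submodule.mem_comap, LinearMap.mulRight_apply]
    rw [mul_assoc]
    exact mul_mem_T x (rewrite_mem huv huw hvw h g2 hh h2)
  exact hle hz

lemma T_mul_closing {u w : Fin n} {z : PvbDual n} (hz : z ∈ T u w) (g : PvGen n)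
    (hg : g.1 = (w,u) ∨ g.1 = (u,w)) : z * R g = 0 := by
  have key : ∀ h : PvGen n, (h.1 = (u,w) ∨ h.1 = (w,u)) → R h * R g = 0 := by
    intro h hh
    have huw : u ≠ w := by
      rcases hh with hh | hh
      · intro hc; exact h.2 (by rw [hh, hc])
      · intro hc; exact h.2 (by rw [hh, hc])
    rcases hh with hh | hh <;> rcases hg with hg | hg
    · have : h = ⟨(u,w), huw⟩ := Subtype.ext hh
      have hg' : g = ⟨(w,u), huw.symm⟩ := Subtype.ext hg
      rw [this, hg']; exact relC u w huw
    · have : h = ⟨(u,w), huw⟩ := Subtype.ext hh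
      have hg' : g = ⟨(u,w), huw⟩ := Subtype.ext hg
      rw [this, hg']; exact R_sq _
    · have : h = ⟨(w,u), huw.symm⟩ := Subtype.ext hh
      have hg' : g = ⟨(w,u), huw.symm⟩ := Subtype.ext hg
      rw [this, hg']; exact R_sq _
    · have : h = ⟨(w,u), huw.symm⟩ := Subtype.ext hh
      have hg' : g = ⟨(u,w), huw⟩ := Subtype.ext hg
      rw [this, hg']; exact relC w u huw.symm
  have hle : T u w ≤ Submodule.comap (LinearMap.mulRight ℚ (R g)) (⊥ : Submodule ℚ (PvbDual n)) := by
    rw [T, Submodule.span_le]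
    rintro _ ⟨x, h, hh, rfl⟩
    simp only [SetLike.mem_coe, Submodule.mem_comap, LinearMap.mulRight_apply, Submodule.mem_bot]
    rw [mul_assoc, key h hh, mul_zero]
  simpa using hle hz



lemma path_mem : ∀ (k : ℕ) (c : Fin (k+2) → Fin n), Function.Injective c →
    ∀ (d : Fin (k+1) → PvGen n),
      (∀ i : Fin (k+1), (d i).1 = (c i.castSucc, c i.succ) ∨
          (d i).1 = (c i.succ, c i.castSucc)) →
      (List.ofFn fun i => R (d i)).prod ∈ T (c 0) (c (Fin.last (k+1))) := by
  intro k
  induction k with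
  | zero =>
    intro c hc d hd
    have h0 := hd 0
    have hcs : (0 : Fin 1).castSucc = (0 : Fin 2) := rfl
    have hsc : (0 : Fin 1).succ = Fin.last 1 := rfl
    rw [hcs, hsc] at h0
    have : (List.ofFn fun i : Fin 1 => R (d i)).prod = 1 * R (d 0) := by
      simp [List.ofFn_succ]
    rw [this]
    exact mem_T _ _ h0
  | succ k ih =>
    intro c hc d hd
    rw [List.ofFn_succ', List.concat_eq_append, List.prod_append, List.prod_singleton]
    set c' : Fin (k+2) → Fin n := fun i => c i.castSucc with hc'
    have hc'inj : Function.Injective c' := fun a b hab =>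
      Fin.castSucc_injective _ (hc hab)
    have hinit := ih c' hc'inj (fun i => d i.castSucc) (by
      intro i
      have := hd i.castSucc
      rw [Fin.succ_castSucc] at this; exact this)
    have hlast := hd (Fin.last (k+1))
    rw [Fin.succ_last] at hlast
    have h0 : c' 0 = c 0 := by simp [hc']
    have hl : c' (Fin.last (k+1)) = c (Fin.last (k+1)).castSucc := rfl
    rw [h0, hl] at hinit
    refine T_mul_gen ?_ ?_ ?_ hinit (d (Fin.last (k+1))) hlast
    · exact fun h => (by
        have := hc h
        have : (0 : Fin (k+3)).val = ((Fin.last (k+1)).castSucc).val := congrArg Fin.val this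
        simp [Fin.val_last] at this)
    · exact fun h => (by
        have := hc h
        have : (0 : Fin (k+3)).val = (Fin.last (k+2)).val := congrArg Fin.val this
        simp [Fin.val_last] at this)
    · exact fun h => (by
        have := hc h
        have : ((Fin.last (k+1)).castSucc).val = (Fin.last (k+2)).val := congrArg Fin.val this
        simp [Fin.val_last] at this)

lemma cycle_zero (m : ℕ) (c : Fin (m+2) → Fin n) (hc : Function.Injective c)
    (d : Fin (m+2) → PvGen n)
    (hd : ∀ i, (d i).1 = (c i, c (i+1)) ∨ (d i).1 = (c (i+1), c i)) :
    (List.ofFn fun i => R (d i)).prod = 0 := by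
  rw [List.ofFn_succ', List.concat_eq_append, List.prod_append, List.prod_singleton]
  have hpath := path_mem m c hc (fun i => d i.castSucc) (by
    intro i
    have h1 : (i.castSucc : Fin (m+2)) + 1 = i.succ := Fin.coeSucc_eq_succ
    have := hd i.castSucc
    rwa [h1] at this)
  have hlast := hd (Fin.last (m+1))
  have h1 : (Fin.last (m+1) : Fin (m+2)) + 1 = 0 := by
    apply Fin.ext
    simp [Fin.val_add, Fin.val_last]
  rw [h1] at hlast
  exact T_mul_closing hpath (d (Fin.last (m+1))) (by tauto)



noncomputable def pm (L : List (PvGen n)) : PvbDual n := (L.map R).prod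

@[simp] lemma pm_nil : pm ([] : List (PvGen n)) = 1 := rfl

@[simp] lemma pm_cons (a : PvGen n) (l : List (PvGen n)) : pm (a :: l) = R a * pm l := by
  simp [pm]

lemma pm_append (l₁ l₂ : List (PvGen n)) : pm (l₁ ++ l₂) = pm l₁ * pm l₂ := by
  simp [pm]

lemma perm_pm {L L' : List (PvGen n)} (h : L.Perm L') :
    pm L = pm L' ∨ pm L = -pm L' := by
  induction h with
  | nil => exact Or.inl rfl
  | cons a h ih =>
    rcases ih with ih | ih
    · exact Or.inl (by rw [pm_cons, pm_cons, ih])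
    · exact Or.inr (by rw [pm_cons, pm_cons, ih, mul_neg])
  | swap x y l =>
    right
    rw [pm_cons, pm_cons, pm_cons, pm_cons, ← mul_assoc, ← mul_assoc,
      R_anticomm y x, neg_mul]
  | trans h₁ h₂ ih₁ ih₂ =>
    rcases ih₁ with ih₁ | ih₁ <;> rcases ih₂ with ih₂ | ih₂
    · exact Or.inl (ih₁.trans ih₂)
    · exact Or.inr (ih₁.trans ih₂)
    · exact Or.inr (by rw [ih₁, ih₂])
    · exact Or.inl (by rw [ih₁, ih₂, neg_neg])

lemma pm_zero_of_perm {L L' : List (PvGen n)} (h : L.Perm L') (hz : pm L' = 0) :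
    pm L = 0 := by
  rcases perm_pm h with h' | h' <;> rw [h', hz] <;> simp

lemma exists_perm_append {L A : List (PvGen n)} (h : A.Subperm L) :
    ∃ L₂, L.Perm (A ++ L₂) := by
  have hle : (↑A : Multiset (PvGen n)) ≤ ↑L := Multiset.coe_le.mpr h
  obtain ⟨t, ht⟩ := Multiset.le_iff_exists_add.mp hle
  obtain ⟨l₂, rfl⟩ := Quotient.exists_rep t
  refine ⟨l₂, Multiset.coe_eq_coe.mp ?_⟩
  rw [ht]
  rfl

end Pvb

/-- In `pvb_n^!`, any monomial whose associated directed graph contains a loop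
(a cycle in the underlying undirected multigraph, given by distinct vertices
`c 0, …, c (m+1)` and distinct edge occurrences joining consecutive vertices
cyclically) is zero. -/


theorem pvbDual_monomial_with_loop_eq_zero {n : ℕ} (L : List (PvGen n))
    (hloop : ∃ (m : ℕ) (c : Fin (m + 2) → Fin n) (e : Fin (m + 2) → Fin L.length),
      Function.Injective c ∧ Function.Injective e ∧
        ∀ i : Fin (m + 2),
          (L.get (e i)).val = (c i, c (i + 1)) ∨
          (L.get (e i)).val = (c (i + 1), c i)) :
    pvbMonomial L = 0 := by
  obtain ⟨m, c, e, hc, he, hE⟩ := hloop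
  have hmono : pvbMonomial L = Pvb.pm L := rfl
  rw [hmono]
  set A : List (PvGen n) := List.ofFn (fun i => L.get (e i)) with hA
  have hsub : A.Subperm L := by
    have h1 : (List.ofFn e).Nodup := List.nodup_ofFn.mpr he
    have h2 : List.Subperm (List.ofFn e) (List.finRange L.length) :=
      List.subperm_of_subset h1 (fun x _ => List.mem_finRange x)
    obtain ⟨l', hp, hs⟩ := h2
    have h3 : List.Subperm A ((List.finRange L.length).map L.get) :=
      ⟨l'.map L.get, by simpa [hA, List.map_ofFn, Function.comp_def] using hp.map L.get, hs.map L.get⟩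
    rwa [List.map_get_finRange] at h3
  obtain ⟨L₂, hperm⟩ := Pvb.exists_perm_append hsub
  refine Pvb.pm_zero_of_perm hperm ?_
  rw [Pvb.pm_append]
  have hzero : Pvb.pm A = 0 := by
    have h := Pvb.cycle_zero m c hc (fun i => L.get (e i)) hE
    simpa [Pvb.pm, hA, List.map_ofFn, Function.comp_def] using h
  rw [hzero, zero_mul]
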